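/- If R is a finitely ambiguous regex over Σ, then the star R* is infinitely ambiguous. (Paper's Theorem 4.) -/

import Mathlib

/-! Shared definitions: words, word power, parse trees of regular expressions,
(un)ambiguity, finite/infinite ambiguity, and the Brabrand–Thomsen overlap. -/

universe u

variable {α : Type u}

/-- `wpow w n` is the `n`-fold concatenation `w^n` of the word `w` with itself. -/
def wpow (w : List α) : ℕ → List α
  | 0 => []
  | n + 1 => w ++ wpow w n

/-- Parse trees of a regular expression for a word, defined inductively:
the regex `ε` has a unique parse tree for the empty word; the character regex
for `a` has a unique parse tree for the word `[a]`; a parse tree of `R₁ + R₂`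
(alternation) for `w` is a parse tree of `R₁` for `w` or a parse tree of `R₂`
for `w` (the two sides distinct); a parse tree of `R₁ * R₂` (concatenation)
for `w` is a decomposition `w = u ++ v` with parse trees of `R₁` for `u` and
of `R₂` for `v`; a parse tree of `R*` for `w` is a finite list of words
(possibly empty entries) concatenating to `w` with a parse tree of `R` for each. -/
inductive ParseTree : RegularExpression α → List α → Type u where
  | eps : ParseTree RegularExpression.epsilon []
  | char (a : α) : ParseTree (RegularExpression.char a) [a]
  | plusLeft {R₁ R₂ : RegularExpression α} {w : List α} :
      ParseTree R₁ w → ParseTree (R₁ + R₂) w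
  | plusRight {R₁ R₂ : RegularExpression α} {w : List α} :
      ParseTree R₂ w → ParseTree (R₁ + R₂) w
  | comp {R₁ R₂ : RegularExpression α} {u v : List α} :
      ParseTree R₁ u → ParseTree R₂ v → ParseTree (R₁ * R₂) (u ++ v)
  | starNil {R : RegularExpression α} : ParseTree R.star []
  | starCons {R : RegularExpression α} {u v : List α} :
      ParseTree R u → ParseTree R.star v → ParseTree R.star (u ++ v)

/-- A regex is unambiguous if every word has at most one parse tree of it. -/
def Unambiguous (R : RegularExpression α) : Prop :=
  ∀ (w : List α) (t₁ t₂ : ParseTree R w), t₁ = t₂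

/-- A regex is ambiguous if some word has two distinct parse trees of it. -/
def Ambiguous (R : RegularExpression α) : Prop :=
  ∃ (w : List α) (t₁ t₂ : ParseTree R w), t₁ ≠ t₂

/-- The word `w` has at least `k` distinct parse trees of `R`. -/
def HasAtLeastTrees (R : RegularExpression α) (w : List α) (k : ℕ) : Prop :=
  ∃ l : List (ParseTree R w), l.Nodup ∧ k ≤ l.length

/-- Every word has at most `k` parse trees of `R`. -/
def BoundedBy (R : RegularExpression α) (k : ℕ) : Prop :=
  ∀ (w : List α) (l : List (ParseTree R w)), l.Nodup → l.length ≤ k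

/-- `R` is finitely ambiguous: ambiguous, with a uniform bound on the number
of parse trees of any word. -/
def FinitelyAmbiguous (R : RegularExpression α) : Prop :=
  Ambiguous R ∧ ∃ k : ℕ, BoundedBy R k

/-- `R` is infinitely ambiguous: for every `k` some word has more than `k`
parse trees of `R`. -/
def InfinitelyAmbiguous (R : RegularExpression α) : Prop :=
  ∀ k : ℕ, ∃ w : List α, HasAtLeastTrees R w (k + 1)

/-- Languages `L₁` and `L₂` overlap (nonemptiness of the Brabrand–Thomsen
overlap operator): there are words `x`, `y` and a nonempty word `a` with
`x ∈ L₁`, `x ++ a ∈ L₁`, `a ++ y ∈ L₂`, and `y ∈ L₂`. -/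
def Overlaps (L₁ L₂ : Language α) : Prop :=
  ∃ x y a : List α, a ≠ [] ∧ x ∈ L₁ ∧ x ++ a ∈ L₁ ∧ a ++ y ∈ L₂ ∧ y ∈ L₂

/-- `mixed R t₁ t₂ i k` is the parse tree of `R*` for `w^k` consisting of
`min i k` copies of `t₁` followed by copies of `t₂`. -/
def mixed (R : RegularExpression α) {w : List α} (t₁ t₂ : ParseTree R w) :
    (i k : ℕ) → ParseTree R.star (wpow w k)
  | _, 0 => .starNil
  | 0, k + 1 => .starCons t₂ (mixed R t₁ t₂ 0 k)
  | i + 1, k + 1 => .starCons t₁ (mixed R t₁ t₂ i k)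

theorem mixed_inj (R : RegularExpression α) {w : List α} (t₁ t₂ : ParseTree R w)
    (hne : t₁ ≠ t₂) : ∀ k i j, i ≤ k → j ≤ k →
      mixed R t₁ t₂ i k = mixed R t₁ t₂ j k → i = j := by
  intro k
  induction k with
  | zero => intro i j hi hj _; omega
  | succ k ih =>
    intro i j hi hj hmix
    match i, j with
    | 0, 0 => rfl
    | 0, j + 1 =>
      simp only [mixed] at hmix
      injection hmix with hR hu hv h1 h2
      exact absurd h1.symm hne
    | i + 1, 0 =>
      simp only [mixed] at hmix
      injection hmix with hR hu hv h1 h2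
      exact absurd h1 hne
    | i + 1, j + 1 =>
      simp only [mixed] at hmix
      injection hmix with hR hu hv h1 h2
      have := ih i j (by omega) (by omega) h2
      omega

/-- Theorem 4: if `R` is finitely ambiguous then `R*` is infinitely
ambiguous. -/
theorem stmt_6 {α : Type u} (R : RegularExpression α)
    (h : FinitelyAmbiguous R) : InfinitelyAmbiguous R.star := by
  obtain ⟨⟨w, t₁, t₂, hne⟩, -⟩ := h
  intro k
  refine ⟨wpow w k, (List.range (k + 1)).map (fun i => mixed R t₁ t₂ i k), ?_, ?_⟩
  · refine List.Nodup.map_on ?_ List.nodup_range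
    intro i hi j hj hij
    exact mixed_inj R t₁ t₂ hne k i j
      (Nat.lt_succ_iff.mp (List.mem_range.mp hi))
      (Nat.lt_succ_iff.mp (List.mem_range.mp hj)) hij
  · simp
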